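/- Let M be a nonempty compact metric space and f : M → M continuous. The map μ̃ ↦ π_* μ̃ is a bijection from the set of f̃-invariant Borel probability measures on the inverse limit space M^f onto the set of f-invariant Borel probability measures on M. -/

import Mathlib

open MeasureTheory

/-- The inverse limit space of a map `f : M → M`. -/
def InvLimit {M : Type*} (f : M → M) : Set (ℤ → M) :=
  {x | ∀ n : ℤ, f (x n) = x (n + 1)}

/-- The shift map `f̃` on the inverse limit space. -/
def shiftMap {M : Type*} (f : M → M) (x : InvLimit f) : InvLimit f :=
  ⟨fun n => x.1 (n + 1), fun n => x.2 (n + 1)⟩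

/-- The natural projection `π : M^f → M`, `π x̃ = x̃ 0`. -/
def invProj {M : Type*} (f : M → M) (x : InvLimit f) : M := x.1 0

set_option linter.unusedSectionVars false
set_option linter.unusedTactic false
set_option linter.unnecessarySimpa false
set_option linter.unusedVariables false
set_option maxHeartbeats 1000000

open Set

section Basic
variable {M : Type*} [MetricSpace M] [CompactSpace M] [Nonempty M]
    [MeasurableSpace M] [BorelSpace M] (f : M → M)

lemma IL_isClosed (hf : Continuous f) : IsClosed (InvLimit f) := by
  have : InvLimit f = ⋂ n : ℤ, {x : ℤ → M | f (x n) = x (n+1)} := by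
    ext x; simp [InvLimit]
  rw [this]
  exact isClosed_iInter fun n =>
    isClosed_eq (hf.comp (continuous_apply n)) (continuous_apply (n+1))

lemma IL_compactSpace (hf : Continuous f) : CompactSpace ↥(InvLimit f) :=
  isCompact_iff_compactSpace.mp (IL_isClosed f hf).isCompact

/-- forward determinism -/
lemma IL_det_nat {x : ℤ → M} (hx : x ∈ InvLimit f) (j : ℕ) (m : ℤ) :
    x (m + j) = f^[j] (x m) := by
  induction j with
  | zero => simp
  | succ j ih =>
    have : m + (j + 1 : ℕ) = (m + j) + 1 := by push_cast; ring
    rw [this, ← hx (m + j), ih, ← Function.iterate_succ_apply' f j]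

lemma IL_det {x : ℤ → M} (hx : x ∈ InvLimit f) {m k : ℤ} (h : m ≤ k) :
    x k = f^[(k - m).toNat] (x m) := by
  have h2 : k = m + ((k - m).toNat : ℤ) := by omega
  conv_lhs => rw [h2]
  rw [IL_det_nat f hx]

lemma IL_coord_continuous (k : ℤ) : Continuous fun x : ↥(InvLimit f) => x.1 k :=
  (continuous_apply k).comp continuous_subtype_val

lemma IL_shift_continuous : Continuous (shiftMap f) := by
  refine Continuous.subtype_mk (continuous_pi fun n => ?_) _
  exact IL_coord_continuous f (n + 1)

/-- inverse of the shift map -/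
def shiftInv (x : InvLimit f) : InvLimit f :=
  ⟨fun n => x.1 (n - 1), fun n => by
    show f (x.1 (n - 1)) = x.1 (n + 1 - 1)
    have := x.2 (n - 1)
    rw [show n - 1 + 1 = n by ring] at this
    rw [show n + 1 - 1 = n by ring, this]⟩

lemma IL_shift_shiftInv (x : ↥(InvLimit f)) : shiftMap f (shiftInv f x) = x := by
  apply Subtype.ext; funext n
  show x.1 (n + 1 - 1) = x.1 n
  norm_num

lemma IL_shiftInv_shift (x : ↥(InvLimit f)) : shiftInv f (shiftMap f x) = x := by
  apply Subtype.ext; funext n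
  show x.1 (n - 1 + 1) = x.1 n
  norm_num

lemma IL_shift_iterate (m : ℕ) (x : ↥(InvLimit f)) (k : ℤ) :
    ((shiftMap f)^[m] x).1 k = x.1 (k + m) := by
  induction m generalizing k with
  | zero => simp
  | succ m ih =>
    rw [Function.iterate_succ_apply']
    show ((shiftMap f)^[m] x).1 (k + 1) = _
    rw [ih]
    congr 1; push_cast; ring

lemma IL_shiftInv_iterate (m : ℕ) (x : ↥(InvLimit f)) (k : ℤ) :
    ((shiftInv f)^[m] x).1 k = x.1 (k - m) := by
  induction m generalizing k with
  | zero => simp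
  | succ m ih =>
    rw [Function.iterate_succ_apply']
    show ((shiftInv f)^[m] x).1 (k - 1) = _
    rw [ih]
    congr 1; push_cast; ring

/-- image of a subset of the inverse limit under the `(-n)`-th coordinate map -/
def ILimg (n : ℕ) (K : Set ↥(InvLimit f)) : Set M :=
  (fun x : ↥(InvLimit f) => x.1 (-n : ℤ)) '' K

lemma ILimg_mono {n : ℕ} {K L : Set ↥(InvLimit f)} (h : K ⊆ L) : ILimg f n K ⊆ ILimg f n L :=
  image_mono h

lemma ILimg_union (n : ℕ) (K L : Set ↥(InvLimit f)) :
    ILimg f n (K ∪ L) = ILimg f n K ∪ ILimg f n L :=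
  image_union _ _ _

lemma ILimg_isCompact {n : ℕ} {K : Set ↥(InvLimit f)} (hK : IsCompact K) :
    IsCompact (ILimg f n K) :=
  hK.image (IL_coord_continuous f _)

lemma ILimg_step (n : ℕ) (K : Set ↥(InvLimit f)) :
    ILimg f n K = f '' ILimg f (n + 1) K := by
  unfold ILimg
  rw [image_image]
  apply image_congr
  intro x _
  have := x.2 (-(n + 1) : ℤ)
  rw [show (-(n+1) : ℤ) + 1 = -n by push_cast; ring] at this
  rw [← this]
  norm_num

end Basic

section Content
open ENNReal Filter
variable {M : Type*} [MetricSpace M] [CompactSpace M] [Nonempty M]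
    [MeasurableSpace M] [BorelSpace M] (f : M → M)

/-- If two compact subsets of the inverse limit are disjoint, their coordinate images are
eventually disjoint. -/
lemma IL_eventually_disjoint {K₁ K₂ : Set ↥(InvLimit f)} (h₁ : IsCompact K₁)
    (h₂ : IsCompact K₂) (hd : Disjoint K₁ K₂) :
    ∃ N : ℕ, ∀ n ≥ N, Disjoint (ILimg f n K₁) (ILimg f n K₂) := by
  -- first: nonemptiness of intersections propagates downward
  have step : ∀ n : ℕ, (ILimg f (n+1) K₁ ∩ ILimg f (n+1) K₂).Nonempty →
      (ILimg f n K₁ ∩ ILimg f n K₂).Nonempty := by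
    rintro n ⟨y, hy₁, hy₂⟩
    exact ⟨f y, by rw [ILimg_step]; exact mem_image_of_mem f hy₁,
      by rw [ILimg_step]; exact mem_image_of_mem f hy₂⟩
  have down : ∀ N n : ℕ, N ≤ n → (ILimg f n K₁ ∩ ILimg f n K₂).Nonempty →
      (ILimg f N K₁ ∩ ILimg f N K₂).Nonempty := by
    intro N n hNn
    obtain ⟨j, rfl⟩ := Nat.exists_eq_add_of_le hNn
    induction j with
    | zero => simpa using id
    | succ j ih =>
      intro h
      exact ih (Nat.le_add_right _ _) (step _ (by rw [show N + j + 1 = N + (j+1) by ring]; exact h))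
  -- main claim : some intersection is empty
  suffices h : ∃ N : ℕ, ILimg f N K₁ ∩ ILimg f N K₂ = ∅ by
    obtain ⟨N, hN⟩ := h
    refine ⟨N, fun n hn => Set.disjoint_iff_inter_eq_empty.mpr ?_⟩
    by_contra hne
    exact Set.not_nonempty_empty
      (hN ▸ down N n hn (Set.nonempty_iff_ne_empty.mpr hne))
  by_contra hc
  push_neg at hc
  have hne : ∀ n : ℕ, (ILimg f n K₁ ∩ ILimg f n K₂).Nonempty := hc
  -- choose witnesses
  have choice : ∀ n : ℕ, ∃ p : ↥(InvLimit f) × ↥(InvLimit f),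
      p.1 ∈ K₁ ∧ p.2 ∈ K₂ ∧ p.1.1 (-n : ℤ) = p.2.1 (-n : ℤ) := by
    intro n
    obtain ⟨y, ⟨x₁, hx₁, hx₁y⟩, ⟨x₂, hx₂, hx₂y⟩⟩ := hne n
    exact ⟨(x₁, x₂), hx₁, hx₂, hx₁y.trans hx₂y.symm⟩
  choose z hz₁ hz₂ hzeq using choice
  -- cluster point in K₁ ×ˢ K₂
  have hKK : IsCompact (K₁ ×ˢ K₂) := h₁.prod h₂
  have hle : Filter.map z atTop ≤ Filter.principal (K₁ ×ˢ K₂) := by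
    rw [Filter.le_principal_iff, Filter.mem_map]
    filter_upwards with n
    exact ⟨hz₁ n, hz₂ n⟩
  obtain ⟨p, hp, hcl⟩ := hKK.exists_clusterPt hle
  -- closed sets D j
  set D : ℕ → Set (↥(InvLimit f) × ↥(InvLimit f)) :=
    fun j => {q | ∀ k : ℤ, -(j : ℤ) ≤ k → q.1.1 k = q.2.1 k} with hD
  have hDclosed : ∀ j, IsClosed (D j) := by
    intro j
    have : D j = ⋂ k : ℤ, {q : ↥(InvLimit f) × ↥(InvLimit f) |
        -(j : ℤ) ≤ k → q.1.1 k = q.2.1 k} := by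
      ext q; simp [hD]
    rw [this]
    refine isClosed_iInter fun k => ?_
    by_cases hk : -(j : ℤ) ≤ k
    · have : {q : ↥(InvLimit f) × ↥(InvLimit f) | -(j : ℤ) ≤ k → q.1.1 k = q.2.1 k}
          = {q | q.1.1 k = q.2.1 k} := by ext q; simp [hk]
      rw [this]
      exact isClosed_eq ((IL_coord_continuous f k).comp continuous_fst)
        ((IL_coord_continuous f k).comp continuous_snd)
    · have : {q : ↥(InvLimit f) × ↥(InvLimit f) | -(j : ℤ) ≤ k → q.1.1 k = q.2.1 k}
          = Set.univ := by ext q; simp [hk]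
      rw [this]; exact isClosed_univ
  have hmemD : ∀ j n : ℕ, j ≤ n → z n ∈ D j := by
    intro j n hjn k hk
    have hnk : -(n : ℤ) ≤ k := le_trans (by exact_mod_cast neg_le_neg (Int.ofNat_le.mpr hjn)) hk
    rw [IL_det f (z n).1.2 hnk, IL_det f (z n).2.2 hnk, hzeq n]
  have hpD : ∀ j : ℕ, p ∈ D j := by
    intro j
    have hmem : D j ∈ Filter.map z atTop := by
      rw [Filter.mem_map]
      filter_upwards [Filter.eventually_ge_atTop j] with n hn
      exact hmemD j n hn
    have : ClusterPt p (Filter.principal (D j)) :=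
      hcl.mono (Filter.le_principal_iff.mpr hmem)
    exact (hDclosed j).closure_subset (mem_closure_iff_clusterPt.mpr this)
  have hpe : p.1 = p.2 := by
    apply Subtype.ext; funext k
    exact hpD k.natAbs k (by omega)
  exact Set.disjoint_left.mp hd (Set.mem_prod.mp hp).1 (hpe ▸ (Set.mem_prod.mp hp).2)

variable (μ : Measure M) [IsProbabilityMeasure μ]

lemma IL_map_iterate (hf : Continuous f) (hinv : μ.map f = μ) (k : ℕ) :
    μ.map f^[k] = μ := by
  induction k with
  | zero => simp
  | succ k ih =>
    rw [Function.iterate_succ, ← Measure.map_map (hf.measurable.iterate k) hf.measurable,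
      hinv, ih]

lemma IL_meas_preimage (hf : Continuous f) (hinv : μ.map f = μ) {s : Set M}
    (hs : MeasurableSet s) (k : ℕ) : μ (f^[k] ⁻¹' s) = μ s := by
  conv_rhs => rw [← IL_map_iterate f μ hf hinv k]
  rw [Measure.map_apply (hf.measurable.iterate k) hs]

lemma IL_antitone (hf : Continuous f) (hinv : μ.map f = μ) {K : Set ↥(InvLimit f)}
    (hK : IsCompact K) : Antitone fun n => μ (ILimg f n K) := by
  apply antitone_nat_of_succ_le
  intro n
  have h1 : ILimg f (n+1) K ⊆ f ⁻¹' (ILimg f n K) := by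
    rw [ILimg_step f n K]
    exact Set.subset_preimage_image f _
  calc μ (ILimg f (n+1) K) ≤ μ (f ⁻¹' (ILimg f n K)) := measure_mono h1
    _ = μ (ILimg f n K) := by
        simpa using IL_meas_preimage f μ hf hinv
          (ILimg_isCompact f hK).isClosed.measurableSet 1

/-- the content value of a set in the inverse limit -/
noncomputable def ILc (K : Set ↥(InvLimit f)) : ℝ≥0∞ := ⨅ n : ℕ, μ (ILimg f n K)

lemma ILc_ne_top (K : Set ↥(InvLimit f)) : ILc f μ K ≠ ∞ := by
  show (⨅ n : ℕ, μ (ILimg f n K)) ≠ ⊤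
  exact ((iInf_le (fun n : ℕ => μ (ILimg f n K)) 0).trans_lt (measure_lt_top μ _)).ne

lemma ILc_mono {K L : Set ↥(InvLimit f)} (h : K ⊆ L) : ILc f μ K ≤ ILc f μ L :=
  iInf_mono fun n => measure_mono (ILimg_mono f h)

end Content

section Content2
open ENNReal Filter TopologicalSpace
variable {M : Type*} [MetricSpace M] [CompactSpace M] [Nonempty M]
    [MeasurableSpace M] [BorelSpace M] (f : M → M) (μ : Measure M) [IsProbabilityMeasure μ]

lemma IL_iInf_tail {a : ℕ → ℝ≥0∞} (ha : Antitone a) (N : ℕ) :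
    ⨅ n, a (n + N) = ⨅ n, a n := by
  apply le_antisymm
  · exact le_iInf fun n => (iInf_le _ n).trans (ha (Nat.le_add_right n N))
  · exact le_iInf fun n => iInf_le _ (n + N)

/-- The content on the inverse limit space induced by an invariant measure. -/
noncomputable def ILcontent (hf : Continuous f) (hinv : μ.map f = μ) :
    Content ↥(InvLimit f) where
  toFun K := (ILc f μ K.1).toNNReal
  mono' K₁ K₂ h := ENNReal.toNNReal_mono (ILc_ne_top f μ _) (ILc_mono f μ h)
  sup_le' K₁ K₂ := by
    have key : ILc f μ (K₁.1 ∪ K₂.1) ≤ ILc f μ K₁.1 + ILc f μ K₂.1 := by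
      rw [show ILc f μ K₁.1 + ILc f μ K₂.1
          = ⨅ n : ℕ, (μ (ILimg f n K₁.1) + μ (ILimg f n K₂.1)) from
        ENNReal.iInf_add_iInf fun i j => ⟨max i j,
          add_le_add (IL_antitone f μ hf hinv K₁.2 (le_max_left i j))
            (IL_antitone f μ hf hinv K₂.2 (le_max_right i j))⟩]
      refine iInf_mono fun n => ?_
      rw [ILimg_union]
      exact measure_union_le _ _
    calc (ILc f μ (K₁ ⊔ K₂).1).toNNReal = (ILc f μ (K₁.1 ∪ K₂.1)).toNNReal := rfl
      _ ≤ (ILc f μ K₁.1 + ILc f μ K₂.1).toNNReal := ENNReal.toNNReal_mono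
          (by exact ENNReal.add_ne_top.mpr ⟨ILc_ne_top f μ _, ILc_ne_top f μ _⟩) key
      _ = (ILc f μ K₁.1).toNNReal + (ILc f μ K₂.1).toNNReal :=
          ENNReal.toNNReal_add (ILc_ne_top f μ _) (ILc_ne_top f μ _)
  sup_disjoint' K₁ K₂ hd hc₁ hc₂ := by
    have key : ILc f μ (K₁.1 ∪ K₂.1) = ILc f μ K₁.1 + ILc f μ K₂.1 := by
      apply le_antisymm
      · rw [show ILc f μ K₁.1 + ILc f μ K₂.1
            = ⨅ n : ℕ, (μ (ILimg f n K₁.1) + μ (ILimg f n K₂.1)) from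
          ENNReal.iInf_add_iInf fun i j => ⟨max i j,
            add_le_add (IL_antitone f μ hf hinv K₁.2 (le_max_left i j))
              (IL_antitone f μ hf hinv K₂.2 (le_max_right i j))⟩]
        refine iInf_mono fun n => ?_
        rw [ILimg_union]
        exact measure_union_le _ _
      · obtain ⟨N, hN⟩ := IL_eventually_disjoint f K₁.2 K₂.2 hd
        have hanti : Antitone fun n => μ (ILimg f n (K₁.1 ∪ K₂.1)) :=
          IL_antitone f μ hf hinv (K₁.2.union K₂.2)
        rw [show ILc f μ (K₁.1 ∪ K₂.1) = ⨅ n : ℕ, μ (ILimg f (n + N) (K₁.1 ∪ K₂.1)) from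
          (IL_iInf_tail hanti N).symm]
        refine le_iInf fun n => ?_
        rw [ILimg_union, measure_union (hN (n + N) (Nat.le_add_left N n))
          (ILimg_isCompact f K₂.2).isClosed.measurableSet]
        exact add_le_add (iInf_le (fun m : ℕ => μ (ILimg f m K₁.1)) (n + N))
          (iInf_le (fun m : ℕ => μ (ILimg f m K₂.1)) (n + N))
    calc (ILc f μ (K₁ ⊔ K₂).1).toNNReal = (ILc f μ (K₁.1 ∪ K₂.1)).toNNReal := rfl
      _ = (ILc f μ K₁.1 + ILc f μ K₂.1).toNNReal := by rw [key]
      _ = (ILc f μ K₁.1).toNNReal + (ILc f μ K₂.1).toNNReal :=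
          ENNReal.toNNReal_add (ILc_ne_top f μ _) (ILc_ne_top f μ _)

lemma ILcontent_apply (hf : Continuous f) (hinv : μ.map f = μ)
    (K : Compacts ↥(InvLimit f)) :
    (ILcontent f μ hf hinv K : ℝ≥0∞) = ILc f μ K.1 :=
  ENNReal.coe_toNNReal (ILc_ne_top f μ _)

lemma ILcontent_regular (hf : Continuous f) (hinv : μ.map f = μ) :
    (ILcontent f μ hf hinv).ContentRegular := by
  haveI : CompactSpace ↥(InvLimit f) := IL_compactSpace f hf
  intro K
  apply le_antisymm
  · refine le_iInf fun K' => le_iInf fun hK' => ?_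
    rw [ILcontent_apply, ILcontent_apply]
    exact ILc_mono f μ (hK'.trans interior_subset)
  · apply ENNReal.le_of_forall_pos_le_add
    intro ε hε _
    set δ : ℝ≥0∞ := (ε : ℝ≥0∞) / 2 with hδdef
    have hδ0 : δ ≠ 0 := by
      simp [hδdef, ENNReal.div_eq_zero_iff, (by exact_mod_cast hε.ne' : (ε:ℝ≥0∞) ≠ 0)]
    -- choose n with μ (ILimg f n K) < ILc + δ
    have h1 : ILc f μ K.1 < ILc f μ K.1 + δ :=
      ENNReal.lt_add_right (ILc_ne_top f μ _) hδ0
    have h2 : (⨅ n : ℕ, μ (ILimg f n K.1)) < ILc f μ K.1 + δ := h1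
    obtain ⟨n, hn⟩ := iInf_lt_iff.mp h2
    set S : Set M := ILimg f n K.1 with hSdef
    have hScomp : IsCompact S := ILimg_isCompact f K.2
    -- outer regularity of μ
    obtain ⟨U, hSU, hUopen, hU⟩ := Set.exists_isOpen_lt_of_lt S (μ S + δ)
      (ENNReal.lt_add_right (measure_ne_top μ S) hδ0)
    obtain ⟨r, hr0, hthick⟩ := hScomp.exists_thickening_subset_open hUopen hSU
    set K' : Compacts ↥(InvLimit f) :=
      ⟨{x | x.1 (-n : ℤ) ∈ Metric.cthickening (r/2) S},
        (Metric.isClosed_cthickening.preimage (IL_coord_continuous f _)).isCompact⟩ with hK'def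
    have hr2 : (0:ℝ) < r/2 := by positivity
    have hopen : IsOpen {x : ↥(InvLimit f) | x.1 (-n : ℤ) ∈ Metric.thickening (r/2) S} :=
      Metric.isOpen_thickening.preimage (IL_coord_continuous f _)
    have hsub1 : K.1 ⊆ {x : ↥(InvLimit f) | x.1 (-n : ℤ) ∈ Metric.thickening (r/2) S} :=
      fun x hx => Metric.self_subset_thickening hr2 S (Set.mem_image_of_mem _ hx)
    have hsub2 : {x : ↥(InvLimit f) | x.1 (-n : ℤ) ∈ Metric.thickening (r/2) S} ⊆ K'.1 :=
      fun x hx => Metric.thickening_subset_cthickening _ _ hx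
    have hKsub : K.1 ⊆ interior K'.1 := hsub1.trans (interior_maximal hsub2 hopen)
    have hchain : (ILcontent f μ hf hinv K' : ℝ≥0∞) ≤ (ILcontent f μ hf hinv K : ℝ≥0∞) + ε := by
      rw [ILcontent_apply, ILcontent_apply]
      have e1 : ILc f μ K'.1 ≤ μ (ILimg f n K'.1) :=
        iInf_le (fun m : ℕ => μ (ILimg f m K'.1)) n
      have e2 : ILimg f n K'.1 ⊆ Metric.cthickening (r/2) S := by
        rintro y ⟨x, hx, rfl⟩
        exact hx
      have e3 : Metric.cthickening (r/2) S ⊆ Metric.thickening r S :=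
        Metric.cthickening_subset_thickening' hr0 (half_lt_self hr0) S
      calc ILc f μ K'.1 ≤ μ U := e1.trans (measure_mono ((e2.trans e3).trans hthick))
        _ ≤ μ S + δ := hU.le
        _ ≤ (ILc f μ K.1 + δ) + δ := add_le_add hn.le le_rfl
        _ = ILc f μ K.1 + ε := by
            rw [add_assoc, hδdef, ENNReal.add_halves]
    exact (iInf₂_le K' hKsub).trans hchain
end Content2

section Cyl
open ENNReal Filter TopologicalSpace
variable {M : Type*} [MetricSpace M] [CompactSpace M] [Nonempty M]
    [MeasurableSpace M] [BorelSpace M] (f : M → M) (μ : Measure M) [IsProbabilityMeasure μ]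

/-- König-type lemma: the points with full backward orbits are exactly `⋂ k, f^[k] '' univ`. -/
lemma IL_range_eq (hf : Continuous f) :
    Set.range (fun x : ↥(InvLimit f) => x.1 0) = ⋂ k : ℕ, f^[k] '' Set.univ := by
  apply Set.Subset.antisymm
  · rintro _ ⟨x, rfl⟩
    refine Set.mem_iInter.mpr fun k => ⟨x.1 (-k : ℤ), Set.mem_univ _, ?_⟩
    have := IL_det f x.2 (show (-k : ℤ) ≤ 0 by omega)
    rw [show ((0:ℤ) - (-k : ℤ)).toNat = k by omega] at this
    exact this.symm
  · intro y hy
    set A : ℕ → Set (ℤ → M) := fun j =>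
      {x | x 0 = y ∧ ∀ k : ℤ, -(j:ℤ) ≤ k → k < j → f (x k) = x (k+1)} with hA
    have hdec : ∀ j, A (j+1) ⊆ A j := by
      rintro j x ⟨h0, hch⟩
      exact ⟨h0, fun k hk1 hk2 => hch k (by omega) (by omega)⟩
    have hclosed : ∀ j, IsClosed (A j) := by
      intro j
      have : A j = {x : ℤ → M | x 0 = y} ∩
          ⋂ k : ℤ, {x : ℤ → M | -(j:ℤ) ≤ k → k < j → f (x k) = x (k+1)} := by
        ext x; simp [hA]
      rw [this]
      apply (isClosed_eq (continuous_apply 0) continuous_const).inter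
      refine isClosed_iInter fun k => ?_
      by_cases hk : -(j:ℤ) ≤ k ∧ k < j
      · have : {x : ℤ → M | -(j:ℤ) ≤ k → k < j → f (x k) = x (k+1)}
            = {x | f (x k) = x (k+1)} := by ext x; simp [hk.1, hk.2]
        rw [this]
        exact isClosed_eq (hf.comp (continuous_apply k)) (continuous_apply (k+1))
      · have : {x : ℤ → M | -(j:ℤ) ≤ k → k < j → f (x k) = x (k+1)} = Set.univ := by
          ext x; simp only [Set.mem_setOf_eq, Set.mem_univ, iff_true]
          intro h1 h2; exact absurd ⟨h1, h2⟩ hk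
        rw [this]; exact isClosed_univ
    have hnon : ∀ j, (A j).Nonempty := by
      intro j
      obtain ⟨z, -, hz⟩ := Set.mem_iInter.mp hy j
      refine ⟨fun k => f^[(k + j).toNat] z, ?_, ?_⟩
      · show f^[((0:ℤ) + j).toNat] z = y
        rw [show ((0:ℤ) + (j:ℤ)).toNat = j by omega, hz]
      · intro k hk1 _
        have h1 : (k + 1 + (j:ℤ)).toNat = (k + j).toNat + 1 := by omega
        show f (f^[(k + j).toNat] z) = f^[(k + 1 + (j:ℤ)).toNat] z
        rw [h1, Function.iterate_succ_apply']
    have hinter : (⋂ j, A j).Nonempty := by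
      apply IsCompact.nonempty_iInter_of_sequence_nonempty_isCompact_isClosed A hdec hnon
        ((hclosed 0).isCompact) hclosed
    obtain ⟨x, hx⟩ := hinter
    have hx0 : x 0 = y := (Set.mem_iInter.mp hx 0).1
    have hxIL : x ∈ InvLimit f := by
      intro k
      have := Set.mem_iInter.mp hx (k.natAbs + 1)
      exact this.2 k (by omega) (by omega)
    exact ⟨⟨x, hxIL⟩, hx0⟩

lemma IL_range_full (hf : Continuous f) (hinv : μ.map f = μ) :
    μ (Set.range (fun x : ↥(InvLimit f) => x.1 0)) = 1 := by
  rw [IL_range_eq f hf]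
  have hmeas : ∀ k : ℕ, MeasurableSet (f^[k] '' Set.univ) := fun k =>
    ((isCompact_univ.image (hf.iterate k)).isClosed).measurableSet
  have hone : ∀ k : ℕ, μ (f^[k] '' Set.univ) = 1 := by
    intro k
    have h1 : f^[k] ⁻¹' (f^[k] '' Set.univ) = Set.univ := by
      apply Set.eq_univ_of_forall
      intro x
      exact ⟨x, Set.mem_univ _, rfl⟩
    have := IL_meas_preimage f μ hf hinv (hmeas k) k
    rw [h1] at this
    rw [← this, measure_univ]
  have hcompl : μ (⋂ k : ℕ, f^[k] '' Set.univ)ᶜ = 0 := by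
    rw [Set.compl_iInter]
    refine measure_iUnion_null fun k => ?_
    rw [measure_compl (hmeas k) (measure_ne_top μ _), hone k, measure_univ, tsub_self]
  have hc := measure_compl (MeasurableSet.iInter fun k => hmeas k) (measure_ne_top μ _)
  rw [hcompl, measure_univ] at hc
  have h3 : (1:ℝ≥0∞) ≤ μ (⋂ k : ℕ, f^[k] '' Set.univ) := tsub_eq_zero_iff_le.mp hc.symm
  exact le_antisymm prob_le_one h3

end Cyl

section Meas
open ENNReal Filter TopologicalSpace
variable {M : Type*} [MetricSpace M] [CompactSpace M] [Nonempty M]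
    [MeasurableSpace M] [BorelSpace M] (f : M → M) (μ : Measure M) [IsProbabilityMeasure μ]

/-- cylinder set over coordinate `-n` -/
def ILcyl (n : ℕ) (C : Set M) : Set ↥(InvLimit f) := {x | x.1 (-n : ℤ) ∈ C}

lemma ILcyl_isCompact (hf : Continuous f) {C : Set M} (hC : IsClosed C) (n : ℕ) :
    IsCompact (ILcyl f n C) := by
  haveI : CompactSpace ↥(InvLimit f) := IL_compactSpace f hf
  exact (hC.preimage (IL_coord_continuous f _)).isCompact

lemma ILimg_cyl {C : Set M} {n m : ℕ} (h : n ≤ m) :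
    ILimg f m (ILcyl f n C) =
      f^[m - n] ⁻¹' C ∩ Set.range (fun x : ↥(InvLimit f) => x.1 0) := by
  apply Set.Subset.antisymm
  · rintro _ ⟨x, hx, rfl⟩
    constructor
    · show f^[m - n] (x.1 (-m : ℤ)) ∈ C
      have hd := IL_det f x.2 (show (-m : ℤ) ≤ (-n : ℤ) by omega)
      rw [show ((-n : ℤ) - (-m : ℤ)).toNat = m - n by omega] at hd
      rw [← hd]
      exact hx
    · refine ⟨(shiftInv f)^[m] x, ?_⟩
      show ((shiftInv f)^[m] x).1 0 = x.1 (-m : ℤ)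
      rw [IL_shiftInv_iterate]
      norm_num
  · rintro y ⟨hyC, ⟨x, rfl⟩⟩
    refine ⟨(shiftMap f)^[m] x, ?_, ?_⟩
    · show ((shiftMap f)^[m] x).1 (-n : ℤ) ∈ C
      rw [IL_shift_iterate]
      have hd := IL_det f x.2 (show (0 : ℤ) ≤ (-n : ℤ) + m by omega)
      rw [show ((-n : ℤ) + m - 0).toNat = m - n by omega] at hd
      rw [hd]
      exact hyC
    · show ((shiftMap f)^[m] x).1 (-m : ℤ) = x.1 0
      rw [IL_shift_iterate]
      norm_num

lemma ILc_cyl (hf : Continuous f) (hinv : μ.map f = μ) {C : Set M} (hC : IsClosed C)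
    (n : ℕ) : ILc f μ (ILcyl f n C) = μ C := by
  have hval : ∀ m : ℕ, n ≤ m → μ (ILimg f m (ILcyl f n C)) = μ C := by
    intro m hm
    rw [ILimg_cyl f hm]
    have hfull := IL_range_full f μ hf hinv
    set R := Set.range (fun x : ↥(InvLimit f) => x.1 0) with hR
    have hRmeas : MeasurableSet R := by
      rw [hR, IL_range_eq f hf]
      exact MeasurableSet.iInter fun k =>
        ((isCompact_univ.image (hf.iterate k)).isClosed).measurableSet
    have h1 : μ (f^[m-n] ⁻¹' C ∩ R) = μ (f^[m-n] ⁻¹' C) := by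
      apply le_antisymm (measure_mono Set.inter_subset_left)
      calc μ (f^[m-n] ⁻¹' C) ≤ μ ((f^[m-n] ⁻¹' C ∩ R) ∪ Rᶜ) := by
            apply measure_mono
            intro x hx
            by_cases hxR : x ∈ R
            · exact Or.inl ⟨hx, hxR⟩
            · exact Or.inr hxR
        _ ≤ μ (f^[m-n] ⁻¹' C ∩ R) + μ Rᶜ := measure_union_le _ _
        _ = μ (f^[m-n] ⁻¹' C ∩ R) := by
            rw [measure_compl hRmeas (measure_ne_top μ _), hfull, measure_univ, tsub_self,
              add_zero]
    rw [h1, IL_meas_preimage f μ hf hinv hC.measurableSet]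
  apply le_antisymm
  · exact (iInf_le (fun m : ℕ => μ (ILimg f m (ILcyl f n C))) n).trans_eq (hval n le_rfl)
  · refine le_iInf fun m => ?_
    rcases le_or_gt n m with h | h
    · exact (hval m h).ge
    · calc μ C = μ (ILimg f n (ILcyl f n C)) := (hval n le_rfl).symm
        _ ≤ μ (ILimg f m (ILcyl f n C)) :=
            IL_antitone f μ hf hinv (ILcyl_isCompact f hf hC n) h.le

/-- The inverse-limit measure induced by an invariant measure. -/
noncomputable def ILmeasure (hf : Continuous f) (hinv : μ.map f = μ) :
    Measure ↥(InvLimit f) :=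
  (ILcontent f μ hf hinv).measure

lemma ILmeasure_compacts (hf : Continuous f) (hinv : μ.map f = μ)
    {K : Set ↥(InvLimit f)} (hK : IsCompact K) :
    ILmeasure f μ hf hinv K = ILc f μ K := by
  have h1 := (ILcontent f μ hf hinv).measure_eq_content_of_regular
    (ILcontent_regular f μ hf hinv) ⟨K, hK⟩
  exact h1.trans (ILcontent_apply f μ hf hinv ⟨K, hK⟩)

lemma ILmeasure_cyl (hf : Continuous f) (hinv : μ.map f = μ) {C : Set M}
    (hC : IsClosed C) (n : ℕ) :
    ILmeasure f μ hf hinv (ILcyl f n C) = μ C := by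
  rw [ILmeasure_compacts f μ hf hinv (ILcyl_isCompact f hf hC n), ILc_cyl f μ hf hinv hC]

lemma ILmeasure_univ (hf : Continuous f) (hinv : μ.map f = μ) :
    ILmeasure f μ hf hinv Set.univ = 1 := by
  have h : (Set.univ : Set ↥(InvLimit f)) = ILcyl f 0 Set.univ := by
    ext x; simp [ILcyl]
  rw [h, ILmeasure_cyl f μ hf hinv isClosed_univ, measure_univ]

instance ILmeasure_prob (hf : Continuous f) (hinv : μ.map f = μ) :
    IsProbabilityMeasure (ILmeasure f μ hf hinv) :=
  ⟨ILmeasure_univ f μ hf hinv⟩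

end Meas

section Push
open ENNReal Filter TopologicalSpace
variable {M : Type*} [MetricSpace M] [CompactSpace M] [Nonempty M]
    [MeasurableSpace M] [BorelSpace M] (f : M → M) (μ : Measure M) [IsProbabilityMeasure μ]

lemma IL_proj_continuous : Continuous (invProj f) := IL_coord_continuous f 0

lemma IL_proj_preimage (C : Set M) : invProj f ⁻¹' C = ILcyl f 0 C := by
  ext x; simp [invProj, ILcyl]

lemma IL_shift_preimage_cyl (n : ℕ) (C : Set M) :
    shiftMap f ⁻¹' (ILcyl f (n+1) C) = ILcyl f n C := by
  ext x
  show (shiftMap f x).1 (-(n+1 : ℕ) : ℤ) ∈ C ↔ x.1 (-n : ℤ) ∈ C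
  show x.1 ((-(n+1 : ℕ) : ℤ) + 1) ∈ C ↔ _
  rw [show (-(n+1 : ℕ) : ℤ) + 1 = -n by push_cast; ring]

lemma ILcyl_measurableSet {B : Set M} (hB : MeasurableSet B) (n : ℕ) :
    MeasurableSet (ILcyl f n B) :=
  (IL_coord_continuous f (-n : ℤ)).measurable hB

/-- The value of any shift-invariant probability measure on cylinders is determined by its
projection. -/
lemma IL_inv_cyl_measure (μt : Measure ↥(InvLimit f)) [IsProbabilityMeasure μt]
    (hi : μt.map (shiftMap f) = μt) {B : Set M} (hB : MeasurableSet B) (n : ℕ) :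
    μt (ILcyl f n B) = μt.map (invProj f) B := by
  induction n with
  | zero =>
    rw [Measure.map_apply (IL_proj_continuous f).measurable hB, IL_proj_preimage]
  | succ n ih =>
    calc μt (ILcyl f (n+1) B) = μt.map (shiftMap f) (ILcyl f (n+1) B) := by rw [hi]
      _ = μt (shiftMap f ⁻¹' (ILcyl f (n+1) B)) :=
          Measure.map_apply (IL_shift_continuous f).measurable (ILcyl_measurableSet f hB (n+1))
      _ = μt (ILcyl f n B) := by rw [IL_shift_preimage_cyl]
      _ = μt.map (invProj f) B := ih

lemma ILmeasure_map_proj (hf : Continuous f) (hinv : μ.map f = μ) :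
    (ILmeasure f μ hf hinv).map (invProj f) = μ := by
  haveI : IsProbabilityMeasure ((ILmeasure f μ hf hinv).map (invProj f)) :=
    Measure.isProbabilityMeasure_map (IL_proj_continuous f).measurable.aemeasurable
  refine ext_of_generate_finite {s : Set M | IsClosed s}
    (BorelSpace.measurable_eq.trans borel_eq_generateFrom_isClosed) isPiSystem_isClosed
    (fun C hC => ?_) (by simp)
  rw [Measure.map_apply (IL_proj_continuous f).measurable hC.measurableSet,
    IL_proj_preimage, ILmeasure_cyl f μ hf hinv hC]

lemma ILimg_shift_pre (n : ℕ) (C : Set ↥(InvLimit f)) :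
    ILimg f n (shiftMap f ⁻¹' C) = ILimg f (n+1) C := by
  apply Set.Subset.antisymm
  · rintro _ ⟨x, hx, rfl⟩
    refine ⟨shiftMap f x, hx, ?_⟩
    show (shiftMap f x).1 (-(n+1 : ℕ) : ℤ) = x.1 (-n : ℤ)
    show x.1 ((-(n+1 : ℕ) : ℤ) + 1) = x.1 (-n : ℤ)
    congr 1; push_cast; ring
  · rintro _ ⟨y, hy, rfl⟩
    refine ⟨shiftInv f y, ?_, ?_⟩
    · show shiftMap f (shiftInv f y) ∈ C
      rw [IL_shift_shiftInv]
      exact hy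
    · show (shiftInv f y).1 (-n : ℤ) = y.1 (-(n+1 : ℕ) : ℤ)
      show y.1 ((-n : ℤ) - 1) = y.1 (-(n+1 : ℕ) : ℤ)
      congr 1; push_cast; ring

lemma ILmeasure_map_shift (hf : Continuous f) (hinv : μ.map f = μ) :
    (ILmeasure f μ hf hinv).map (shiftMap f) = ILmeasure f μ hf hinv := by
  haveI : CompactSpace ↥(InvLimit f) := IL_compactSpace f hf
  haveI : IsProbabilityMeasure ((ILmeasure f μ hf hinv).map (shiftMap f)) :=
    Measure.isProbabilityMeasure_map (IL_shift_continuous f).measurable.aemeasurable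
  refine ext_of_generate_finite {s : Set ↥(InvLimit f) | IsClosed s}
    (BorelSpace.measurable_eq.trans borel_eq_generateFrom_isClosed) isPiSystem_isClosed
    (fun C hC => ?_) (by simp)
  rw [Measure.map_apply (IL_shift_continuous f).measurable hC.measurableSet]
  have hCc : IsCompact C := hC.isCompact
  have hpc : IsCompact (shiftMap f ⁻¹' C) :=
    (hC.preimage (IL_shift_continuous f)).isCompact
  rw [ILmeasure_compacts f μ hf hinv hpc, ILmeasure_compacts f μ hf hinv hCc]
  have h1 : ILc f μ (shiftMap f ⁻¹' C) = ⨅ n : ℕ, μ (ILimg f (n + 1) C) := by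
    unfold ILc
    exact iInf_congr fun n => by rw [ILimg_shift_pre]
  rw [h1]
  exact IL_iInf_tail (IL_antitone f μ hf hinv hCc) 1

end Push

theorem pushforward_bijOn_invariant_measures
    {M : Type*} [MetricSpace M] [CompactSpace M] [Nonempty M]
    [MeasurableSpace M] [BorelSpace M]
    (f : M → M) (hf : Continuous f) :
    Set.BijOn (fun μt : Measure ↥(InvLimit f) => μt.map (invProj f))
      {μt : Measure ↥(InvLimit f) |
        IsProbabilityMeasure μt ∧ μt.map (shiftMap f) = μt}
      {μ : Measure M | IsProbabilityMeasure μ ∧ μ.map f = μ} := by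
  classical
  refine ⟨?_, ?_, ?_⟩
  · -- MapsTo
    rintro μt ⟨hp, hi⟩
    haveI := hp
    refine ⟨Measure.isProbabilityMeasure_map (IL_proj_continuous f).measurable.aemeasurable, ?_⟩
    have hcomm : f ∘ invProj f = invProj f ∘ shiftMap f := funext fun x => x.2 0
    show (μt.map (invProj f)).map f = μt.map (invProj f)
    calc (μt.map (invProj f)).map f = μt.map (f ∘ invProj f) :=
          Measure.map_map hf.measurable (IL_proj_continuous f).measurable
      _ = μt.map (invProj f ∘ shiftMap f) := by rw [hcomm]
      _ = (μt.map (shiftMap f)).map (invProj f) :=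
          (Measure.map_map (IL_proj_continuous f).measurable
            (IL_shift_continuous f).measurable).symm
      _ = μt.map (invProj f) := by rw [hi]
  · -- InjOn
    rintro μ1 ⟨h1p, h1i⟩ μ2 ⟨h2p, h2i⟩ heq
    haveI := h1p; haveI := h2p
    simp only at heq
    set P : Set (Set ↥(InvLimit f)) :=
      (Set.preimage (Subtype.val : ↥(InvLimit f) → (ℤ → M)) ''
        MeasureTheory.measurableCylinders (fun _ : ℤ => M)) with hP
    refine ext_of_generate_finite P ?_ ?_ ?_ (by simp)
    · -- generates
      show MeasurableSpace.comap (Subtype.val) (MeasurableSpace.pi) =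
        MeasurableSpace.generateFrom P
      rw [← MeasureTheory.generateFrom_measurableCylinders,
        MeasurableSpace.comap_generateFrom]
    · -- π-system
      rintro S₁ ⟨A₁, hA₁, rfl⟩ S₂ ⟨A₂, hA₂, rfl⟩ hne
      rw [← Set.preimage_inter]
      refine Set.mem_image_of_mem _
        (MeasureTheory.isPiSystem_measurableCylinders A₁ hA₁ A₂ hA₂ ?_)
      obtain ⟨x, hx⟩ := hne
      exact ⟨x.1, hx⟩
    · -- equal values on cylinders
      rintro S ⟨A, hA, rfl⟩
      rw [MeasureTheory.mem_measurableCylinders] at hA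
      obtain ⟨s, T, hT, rfl⟩ := hA
      set n : ℕ := s.sup (fun i => i.natAbs) with hn
      have hbound : ∀ i ∈ s, (-n : ℤ) ≤ i := by
        intro i hi
        have h2 : i.natAbs ≤ n := by
          simpa using Finset.le_sup (f := fun i : ℤ => i.natAbs) hi
        omega
      set g : M → (∀ _ : s, M) := fun y => (fun i : s => f^[((i : ℤ) + n).toNat] y) with hg
      have hgmeas : Measurable g :=
        measurable_pi_lambda _ fun i => hf.measurable.iterate _
      have hset : (Subtype.val : ↥(InvLimit f) → (ℤ → M)) ⁻¹' MeasureTheory.cylinder s T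
          = ILcyl f n (g ⁻¹' T) := by
        ext x
        have hrestrict : Finset.restrict s x.1 = g (x.1 (-n : ℤ)) := by
          funext i
          have hd := IL_det f x.2 (hbound i i.2)
          rw [show ((i : ℤ) - (-n : ℤ)).toNat = ((i : ℤ) + n).toNat by omega] at hd
          exact hd
        show x.1 ∈ MeasureTheory.cylinder s T ↔ _
        rw [MeasureTheory.mem_cylinder, hrestrict]
        exact Iff.rfl
      rw [hset, IL_inv_cyl_measure f μ1 h1i (hgmeas hT),
        IL_inv_cyl_measure f μ2 h2i (hgmeas hT), heq]
  · -- SurjOn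
    rintro ν ⟨hνp, hνinv⟩
    haveI := hνp
    exact ⟨ILmeasure f ν hf hνinv, ⟨ILmeasure_prob f ν hf hνinv,
      ILmeasure_map_shift f ν hf hνinv⟩, ILmeasure_map_proj f ν hf hνinv⟩
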